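/- Let n = n₁ + n₂ and let σ = (j₁,…,jₙ) ∈ {1,2}ⁿ have exactly n₁ entries equal to 1 and n₂ entries equal to 2. For j ∈ {1,2}, let σ_j(k) = #{ℓ ≤ k : j_ℓ = j}. Let ξ₁,…,ξₙ ∈ ℝ, p₀ = q₀ = 0, and p₁,…,p_{n₁}, q₁,…,q_{n₂}, z ∈ ℝⁿ. Let M be the n×n matrix whose k-th row is p_{σ₁(k)} + q_{σ₂(k)} + ξ_k·z for k = 1,…,n, and let M′ be the n×n matrix whose rows are p_{k₁} + φ₁^σ(k₁)·z for k₁ = 1,…,n₁ followed by q_{k₂} + φ₂^σ(k₂)·z for k₂ = 1,…,n₂, where for j = 1,2 the function φ_j^σ is defined by φ_j^σ(0) = 0 and φ_j^σ(ℓ) = Φ_j(σ_j^{−1}(ℓ)) for ℓ = 1,…,n_j, with σ_j^{−1}(ℓ) = min{k : σ_j(k) = ℓ} and Φ_j(k) = ξ_k + Σ_{ℓ < k, j_ℓ ≠ j_{ℓ+1}} (−1)^{j + j_ℓ}·ξ_ℓ. Then |det M| = |det M′|. -/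

import Mathlib

open MeasureTheory Set Submodule
open scoped RealInnerProductSpace Pointwise Classical

noncomputable section

abbrev Euc (n : ℕ) := EuclideanSpace ℝ (Fin n)

variable {n : ℕ}

/-- A convex body: a compact convex set with nonempty interior. -/
def IsConvexBody (K : Set (Euc n)) : Prop :=
  Convex ℝ K ∧ IsCompact K ∧ (interior K).Nonempty

/-- The polar of a set. -/
def polarSet (K : Set (Euc n)) : Set (Euc n) := {y | ∀ x ∈ K, ⟪x, y⟫ ≤ 1}

/-- Volume (as a real number). -/
def vol (A : Set (Euc n)) : ℝ := (volume A).toReal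

/-- The volume product of a symmetric convex body. -/
def volProd (K : Set (Euc n)) : ℝ := vol K * vol (polarSet K)

/-- Banach–Mazur distance between symmetric convex bodies. -/
def bmDist (K L : Set (Euc n)) : ℝ :=
  sInf {c : ℝ | 1 ≤ c ∧ ∃ T : (Euc n) ≃ₗ[ℝ] (Euc n), L ⊆ T '' K ∧ T '' K ⊆ c • L}

/-- The dimension of a set: dimension of the linear span of `A - A`. -/
def setDim (A : Set (Euc n)) : ℕ :=
  Module.finrank ℝ (Submodule.span ℝ (A - A) : Submodule ℝ (Euc n))

/-- Dimension with the convention `dim ∅ = -1`. -/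
def edim (A : Set (Euc n)) : ℤ := if A = ∅ then -1 else (setDim A : ℤ)

/-- ℓ1-sum, with the convention `A ⊕₁ ∅ = A`, `∅ ⊕₁ B = B`. -/
def l1Sum (A B : Set (Euc n)) : Set (Euc n) :=
  if A = ∅ then B else if B = ∅ then A else convexHull ℝ (A ∪ B)

/-- The centroid of a set, computed with respect to the Hausdorff measure of dimension
`setDim A` (this is the Lebesgue measure on the affine hull for convex sets). -/
def centroid (A : Set (Euc n)) : Euc n :=
  ((μH[(setDim A : ℝ)] A).toReal)⁻¹ • ∫ x in A, x ∂(μH[(setDim A : ℝ)])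

/-- `F` is a (proper, nonempty) face of `P` cut out by a supporting hyperplane whose normal
vector lies in `V`. -/
def IsFaceIn (V : Submodule ℝ (Euc n)) (P F : Set (Euc n)) : Prop :=
  ∃ (u : Euc n) (b : ℝ), u ∈ V ∧ u ≠ 0 ∧ (∀ x ∈ P, ⟪x, u⟫ ≤ b) ∧
    (∃ x ∈ P, ⟪x, u⟫ = b) ∧ F = {x ∈ P | ⟪x, u⟫ = b} ∧ F ≠ P

/-- `F` is a face of `P` (cut out by a supporting hyperplane). -/
def IsFaceOf (P F : Set (Euc n)) : Prop := IsFaceIn ⊤ P F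

/-- The polar of `K` computed inside the subspace `V`. -/
def polarIn (V : Submodule ℝ (Euc n)) (K : Set (Euc n)) : Set (Euc n) :=
  {y | y ∈ V ∧ ∀ x ∈ K, ⟪x, y⟫ ≤ 1}

/-- The dual face of a face `F` of `P`, computed inside the subspace `V`. -/
def dualFaceIn (V : Submodule ℝ (Euc n)) (P F : Set (Euc n)) : Set (Euc n) :=
  {y ∈ polarIn V P | ∀ x ∈ F, ⟪x, y⟫ = 1}

/-- The dual face `F* = {y ∈ P° : ⟨x,y⟩ = 1 ∀ x ∈ F}`. -/
def dualFace (P F : Set (Euc n)) : Set (Euc n) := dualFaceIn ⊤ P F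

/-- A convex polytope: convex hull of finitely many points. -/
def IsPolytope (P : Set (Euc n)) : Prop := ∃ S : Finset (Euc n), P = convexHull ℝ (S : Set (Euc n))

/-- A flag over `P`: an increasing chain of faces `F⁰ ⊂ F¹ ⊂ ⋯ ⊂ F^{n-1}` with `dim F^k = k`. -/
def IsFlagOf (P : Set (Euc n)) (𝔽 : Fin n → Set (Euc n)) : Prop :=
  (∀ k, IsFaceOf P (𝔽 k)) ∧ (∀ k : Fin n, setDim (𝔽 k) = (k : ℕ)) ∧
  (∀ k l : Fin n, k ≤ l → 𝔽 k ⊆ 𝔽 l)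

/-- The volume of the simplex `Z_𝔽 = conv{0, z_{F⁰}, …, z_{F^{n-1}}}`. -/
def flagVol (Z : Set (Euc n) → Euc n) (𝔽 : Fin n → Set (Euc n)) : ℝ :=
  vol (convexHull ℝ (insert (0 : Euc n) (Set.range fun k => Z (𝔽 k))))

/-- The volume function `V(Z) = Σ_𝔽 |Z_𝔽|`, sum over all flags of `P`. -/
def Vfun (P : Set (Euc n)) (Z : Set (Euc n) → Euc n) : ℝ :=
  ∑ᶠ (𝔽 : Fin n → Set (Euc n)) (_ : IsFlagOf P 𝔽), flagVol Z 𝔽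

/-- The partial volume function: sum over all flags of `P` containing the face `G`. -/
def VfunG (P G : Set (Euc n)) (Z : Set (Euc n) → Euc n) : ℝ :=
  ∑ᶠ (𝔽 : Fin n → Set (Euc n)) (_ : IsFlagOf P 𝔽 ∧ G ∈ Set.range 𝔽), flagVol Z 𝔽

/-- `x_F` is the point of `(t_F • A_F) ∩ ∂K` nearest to `c_F`, where `t_F • A_F` is
tangent to `K`. -/
def TangentXPoint (K AF : Set (Euc n)) (cF : Euc n) (tF : ℝ) (xF : Euc n) : Prop :=
  0 < tF ∧ (tF • AF) ∩ interior K = ∅ ∧ xF ∈ (tF • AF) ∩ frontier K ∧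
  ∀ z ∈ (tF • AF) ∩ frontier K, dist cF xF ≤ dist cF z

/-- The pair of points `x_F, y_F` constructed from `K`, `A_F`, `c_F`. -/
def TangentPointAt (K AF : Set (Euc n)) (cF : Euc n) (tF : ℝ) (xF yF : Euc n) : Prop :=
  TangentXPoint K AF cF tF xF ∧ yF = tF • cF

/-- Conditions (a) and (b) for the affine subspace `A F` at a face `F` of `body`. -/
def GoodAt (body : Set (Euc n)) (A : Set (Euc n) → Set (Euc n)) (c : Set (Euc n) → Euc n)
    (F : Set (Euc n)) : Prop :=
  (∃ S : AffineSubspace ℝ (Euc n), A F = (S : Set (Euc n))) ∧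
  A F ∩ body = {c F} ∧ c F ∈ intrinsicInterior ℝ F ∧
  setDim (A F) + setDim F + 1 = n

/-- Conditions (a), (b), (c) for the family of affine subspaces `A_F` attached to the faces
of `P` and of `P°`. -/
def GoodFamily (P : Set (Euc n)) (A : Set (Euc n) → Set (Euc n)) (c : Set (Euc n) → Euc n) : Prop :=
  (∀ F, IsFaceOf P F → GoodAt P A c F ∧
      ∀ x ∈ A F, ∀ y ∈ A (dualFace P F), ⟪x, y⟫ = 1) ∧
  (∀ G, IsFaceOf (polarSet P) G → GoodAt (polarSet P) A c G)

/-- Hanner polytopes: symmetric segments, closed under ℓ1 and ℓ∞ sums of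
linearly independent summands. -/
inductive IsHanner : Set (Euc n) → Prop
  | seg (x : Euc n) (hx : x ≠ 0) : IsHanner (segment ℝ (-x) x)
  | l1 {A B : Set (Euc n)} (hA : IsHanner A) (hB : IsHanner B)
      (hspan : Submodule.span ℝ A ⊓ Submodule.span ℝ B = ⊥) :
      IsHanner (convexHull ℝ (A ∪ B))
  | linf {A B : Set (Euc n)} (hA : IsHanner A) (hB : IsHanner B)
      (hspan : Submodule.span ℝ A ⊓ Submodule.span ℝ B = ⊥) :
      IsHanner (A + B)

/-- The rules of Definition 4.1 defining `A` on the faces of the ℓ1-sum `H₁ ⊕₁ H₂` from the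
families `A₁, A₂` for `H₁, H₂`. -/
def L1Rules (H₁ H₂ : Set (Euc n)) (A₁ A₂ A : Set (Euc n) → Set (Euc n)) : Prop :=
  (∀ F₁, IsFaceIn (Submodule.span ℝ H₁) H₁ F₁ →
      A F₁ = A₁ F₁ + (Submodule.span ℝ H₂ : Set (Euc n))) ∧
  (∀ F₂, IsFaceIn (Submodule.span ℝ H₂) H₂ F₂ →
      A F₂ = (Submodule.span ℝ H₁ : Set (Euc n)) + A₂ F₂) ∧
  (∀ F₁ F₂, IsFaceIn (Submodule.span ℝ H₁) H₁ F₁ → IsFaceIn (Submodule.span ℝ H₂) H₂ F₂ →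
      A (convexHull ℝ (F₁ ∪ F₂)) =
        ((setDim F₁ + 1 : ℝ) / (setDim F₁ + setDim F₂ + 2)) • A₁ F₁ +
        ((setDim F₂ + 1 : ℝ) / (setDim F₁ + setDim F₂ + 2)) • A₂ F₂)

/-- The rules of Definition 4.1 defining `A` on the faces of the ℓ∞-sum `H₁ ⊕∞ H₂` from the
families `A₁, A₂` for `H₁, H₂`. -/
def LInfRules (H₁ H₂ : Set (Euc n)) (A₁ A₂ A : Set (Euc n) → Set (Euc n)) : Prop :=
  (∀ F₁, IsFaceIn (Submodule.span ℝ H₁) H₁ F₁ → A (F₁ + H₂) = A₁ F₁) ∧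
  (∀ F₂, IsFaceIn (Submodule.span ℝ H₂) H₂ F₂ → A (H₁ + F₂) = A₂ F₂) ∧
  (∀ F₁ F₂, IsFaceIn (Submodule.span ℝ H₁) H₁ F₁ → IsFaceIn (Submodule.span ℝ H₂) H₂ F₂ →
      A (F₁ + F₂) = A₁ F₁ + A₂ F₂ +
        (Submodule.span ℝ
          {(((setDim H₁ : ℝ) - setDim F₁)⁻¹ • centroid F₁ -
            ((setDim H₂ : ℝ) - setDim F₂)⁻¹ • centroid F₂)} : Set (Euc n)))

/-- A Hanner polytope `H` together with its recursively defined family `A` of affine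
subspaces, paired with the (relative) polar Hanner polytope `H'` and its family `A'`. -/
inductive HannerRep :
    Set (Euc n) → (Set (Euc n) → Set (Euc n)) → Set (Euc n) → (Set (Euc n) → Set (Euc n)) → Prop
  | seg (x : Euc n) (hx : x ≠ 0) (A A' : Set (Euc n) → Set (Euc n))
      (hA1 : A {x} = {x}) (hA2 : A {-x} = {-x})
      (hA'1 : A' {(‖x‖ ^ 2)⁻¹ • x} = {(‖x‖ ^ 2)⁻¹ • x})
      (hA'2 : A' {-((‖x‖ ^ 2)⁻¹ • x)} = {-((‖x‖ ^ 2)⁻¹ • x)}) :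
      HannerRep (segment ℝ (-x) x) A
        (segment ℝ (-((‖x‖ ^ 2)⁻¹ • x)) ((‖x‖ ^ 2)⁻¹ • x)) A'
  | l1 {H₁ H₂ H₁' H₂' : Set (Euc n)} {A₁ A₂ A₁' A₂' A A' : Set (Euc n) → Set (Euc n)}
      (h₁ : HannerRep H₁ A₁ H₁' A₁') (h₂ : HannerRep H₂ A₂ H₂' A₂')
      (horth : Submodule.span ℝ (H₂ ∪ H₂') ≤ (Submodule.span ℝ (H₁ ∪ H₁'))ᗮ)
      (hA : L1Rules H₁ H₂ A₁ A₂ A) (hA' : LInfRules H₁' H₂' A₁' A₂' A') :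
      HannerRep (convexHull ℝ (H₁ ∪ H₂)) A (H₁' + H₂') A'
  | linf {H₁ H₂ H₁' H₂' : Set (Euc n)} {A₁ A₂ A₁' A₂' A A' : Set (Euc n) → Set (Euc n)}
      (h₁ : HannerRep H₁ A₁ H₁' A₁') (h₂ : HannerRep H₂ A₂ H₂' A₂')
      (horth : Submodule.span ℝ (H₂ ∪ H₂') ≤ (Submodule.span ℝ (H₁ ∪ H₁'))ᗮ)
      (hA : LInfRules H₁ H₂ A₁ A₂ A) (hA' : L1Rules H₁' H₂' A₁' A₂' A') :
      HannerRep (H₁ + H₂) A (convexHull ℝ (H₁' ∪ H₂')) A'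

/-- The standard symmetric segment `[-e_j, e_j]`. -/
def stdSeg (j : Fin n) : Set (Euc n) :=
  segment ℝ (-(EuclideanSpace.single j (1 : ℝ))) (EuclideanSpace.single j (1 : ℝ))

/-- A standard Hanner polytope `H` (built from the segments `[-e_j, e_j]`) together with its
recursively defined family `A` of affine subspaces, paired with the polar standard Hanner
polytope `H'` and its family `A'`. -/
inductive StdHannerRep :
    Set (Euc n) → (Set (Euc n) → Set (Euc n)) → Set (Euc n) → (Set (Euc n) → Set (Euc n)) → Prop
  | seg (j : Fin n) (A A' : Set (Euc n) → Set (Euc n))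
      (hA1 : A {EuclideanSpace.single j (1 : ℝ)} = {EuclideanSpace.single j (1 : ℝ)})
      (hA2 : A {-EuclideanSpace.single j (1 : ℝ)} = {-EuclideanSpace.single j (1 : ℝ)})
      (hA'1 : A' {EuclideanSpace.single j (1 : ℝ)} = {EuclideanSpace.single j (1 : ℝ)})
      (hA'2 : A' {-EuclideanSpace.single j (1 : ℝ)} = {-EuclideanSpace.single j (1 : ℝ)}) :
      StdHannerRep (stdSeg j) A (stdSeg j) A'
  | l1 {H₁ H₂ H₁' H₂' : Set (Euc n)} {A₁ A₂ A₁' A₂' A A' : Set (Euc n) → Set (Euc n)}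
      (h₁ : StdHannerRep H₁ A₁ H₁' A₁') (h₂ : StdHannerRep H₂ A₂ H₂' A₂')
      (hspan : Submodule.span ℝ (H₁ ∪ H₁') ⊓ Submodule.span ℝ (H₂ ∪ H₂') = ⊥)
      (hA : L1Rules H₁ H₂ A₁ A₂ A) (hA' : LInfRules H₁' H₂' A₁' A₂' A') :
      StdHannerRep (convexHull ℝ (H₁ ∪ H₂)) A (H₁' + H₂') A'
  | linf {H₁ H₂ H₁' H₂' : Set (Euc n)} {A₁ A₂ A₁' A₂' A A' : Set (Euc n) → Set (Euc n)}
      (h₁ : StdHannerRep H₁ A₁ H₁' A₁') (h₂ : StdHannerRep H₂ A₂ H₂' A₂')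
      (hspan : Submodule.span ℝ (H₁ ∪ H₁') ⊓ Submodule.span ℝ (H₂ ∪ H₂') = ⊥)
      (hA : LInfRules H₁ H₂ A₁ A₂ A) (hA' : L1Rules H₁' H₂' A₁' A₂' A') :
      StdHannerRep (H₁ + H₂) A (convexHull ℝ (H₁' ∪ H₂')) A'

/-- `H` is a standard Hanner polytope. -/
def IsStdHanner (H : Set (Euc n)) : Prop :=
  ∃ (A : Set (Euc n) → Set (Euc n)) (H' : Set (Euc n)) (A' : Set (Euc n) → Set (Euc n)),
    StdHannerRep H A H' A'

/-- The unit cube `B∞ⁿ = [-1,1]ⁿ`. -/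
def cube (n : ℕ) : Set (Euc n) := {x | ∀ i, |x i| ≤ 1}

/-- The unit cross-polytope `B₁ⁿ`. -/
def crossPolytope (n : ℕ) : Set (Euc n) := {x | ∑ i, |x i| ≤ 1}

/-- The coordinate subspace `ℝ^(v) = span{e_j : j ∈ supp v}`. -/
def suppSpan (v : Euc n) : Submodule ℝ (Euc n) :=
  Submodule.span ℝ {x : Euc n | ∃ j, v j ≠ 0 ∧ x = EuclideanSpace.single j (1 : ℝ)}

/-- Orthogonal projection of a set onto a subspace. -/
def projSet (V : Submodule ℝ (Euc n)) (K : Set (Euc n)) : Set (Euc n) :=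
  (fun x => (orthogonalProjection V x : Euc n)) '' K

end
/-- `σ_j(k)`: the number of entries equal to `j` among the first `k` entries of `js`
(entries indexed `1, …, n`). -/
def countJ (js : ℕ → ℕ) (j k : ℕ) : ℕ :=
  ((Finset.Icc 1 k).filter fun ℓ => js ℓ = j).card

/-- `σ_j^{-1}(ℓ) = min{k : σ_j(k) = ℓ}`. -/
noncomputable def invJ (js : ℕ → ℕ) (j ℓ : ℕ) : ℕ :=
  sInf {k | countJ js j k = ℓ}

/-- `Φ_j(k) = ξ_k + Σ_{ℓ < k, j_ℓ ≠ j_{ℓ+1}} (−1)^{j + j_ℓ} ξ_ℓ`. -/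
noncomputable def PhiJ (js : ℕ → ℕ) (ξ : ℕ → ℝ) (j k : ℕ) : ℝ :=
  ξ k + ∑ ℓ ∈ (Finset.Ico 1 k).filter (fun ℓ => js ℓ ≠ js (ℓ + 1)),
    (-1 : ℝ) ^ (j + js ℓ) * ξ ℓ

/-- `φ_j^σ(0) = 0` and `φ_j^σ(ℓ) = Φ_j(σ_j^{-1}(ℓ))` for `ℓ ≥ 1`. -/
noncomputable def phiJ (js : ℕ → ℕ) (ξ : ℕ → ℝ) (j ℓ : ℕ) : ℝ :=
  if ℓ = 0 then 0 else PhiJ js ξ j (invJ js j ℓ)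

section Aux
variable (js : ℕ → ℕ)

lemma countJ_zero (j : ℕ) : countJ js j 0 = 0 := by simp [countJ]

lemma countJ_succ (j k : ℕ) :
    countJ js j (k+1) = countJ js j k + if js (k+1) = j then 1 else 0 := by
  unfold countJ
  rw [show Finset.Icc 1 (k+1) = insert (k+1) (Finset.Icc 1 k) by
    ext x; simp [Finset.mem_Icc, Finset.mem_insert]; omega]
  rw [Finset.filter_insert]
  split
  · rw [Finset.card_insert_of_notMem (by simp)]
  · simp

lemma countJ_mono (j : ℕ) : Monotone (countJ js j) := by
  intro a b hab
  exact Finset.card_le_card (Finset.filter_subset_filter _ (Finset.Icc_subset_Icc_right hab))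

lemma countJ_le (j k : ℕ) : countJ js j k ≤ k := by
  calc countJ js j k ≤ (Finset.Icc 1 k).card := Finset.card_filter_le _ _
  _ = k := by simp

lemma exists_countJ (j ℓ N : ℕ) (h : ℓ ≤ countJ js j N) : ∃ k ≤ N, countJ js j k = ℓ := by
  induction N with
  | zero =>
    rw [countJ_zero] at h
    exact ⟨0, le_refl 0, by rw [countJ_zero]; omega⟩
  | succ N ih =>
    by_cases h' : ℓ ≤ countJ js j N
    · obtain ⟨k, hk, hk'⟩ := ih h'
      exact ⟨k, by omega, hk'⟩
    · refine ⟨N+1, le_refl _, ?_⟩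
      rw [countJ_succ] at h ⊢
      rcases eq_or_ne (js (N+1)) j with hh | hh <;> simp [hh] at h ⊢ <;> omega

end Aux

section Aux2
variable (js : ℕ → ℕ)

lemma invJ_spec (j ℓ N : ℕ) (h1 : 1 ≤ ℓ) (h2 : ℓ ≤ countJ js j N) :
    1 ≤ invJ js j ℓ ∧ invJ js j ℓ ≤ N ∧ countJ js j (invJ js j ℓ) = ℓ ∧
      js (invJ js j ℓ) = j := by
  obtain ⟨k, hkN, hk⟩ := exists_countJ js j ℓ N h2
  have hne0 : {k' | countJ js j k' = ℓ}.Nonempty := ⟨k, hk⟩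
  have hmem : countJ js j (invJ js j ℓ) = ℓ := Nat.sInf_mem hne0
  set m := invJ js j ℓ with hm
  have hmk : m ≤ k := Nat.sInf_le hk
  have hm1 : 1 ≤ m := by
    rcases Nat.eq_zero_or_pos m with h0 | h0
    · rw [h0, countJ_zero] at hmem; omega
    · exact h0
  have hprev : countJ js j (m - 1) ≠ ℓ := by
    intro hc
    have : m ≤ m - 1 := Nat.sInf_le hc
    omega
  have hsucc : countJ js j m = countJ js j (m-1) + if js m = j then 1 else 0 := by
    have := countJ_succ js j (m-1)
    rwa [show m - 1 + 1 = m from by omega] at this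
  refine ⟨hm1, by omega, hmem, ?_⟩
  by_contra hne'
  rw [if_neg hne', add_zero] at hsucc
  rw [hsucc] at hmem
  exact hprev hmem

lemma invJ_countJ (j k : ℕ) (hk : 1 ≤ k) (hjk : js k = j) :
    invJ js j (countJ js j k) = k := by
  set ℓ := countJ js j k with hℓ
  have hsucc : countJ js j k = countJ js j (k-1) + 1 := by
    have := countJ_succ js j (k-1)
    rw [show k - 1 + 1 = k from by omega] at this
    rw [this, if_pos hjk]
  have hmem : k ∈ {k' | countJ js j k' = ℓ} := by simp [Set.mem_setOf_eq, hℓ]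
  refine le_antisymm (Nat.sInf_le hmem) ?_
  by_contra hlt
  push_neg at hlt
  have hne0 : {k' | countJ js j k' = ℓ}.Nonempty := ⟨k, hmem⟩
  have hmem' : countJ js j (invJ js j ℓ) = ℓ := Nat.sInf_mem hne0
  have : countJ js j (invJ js j ℓ) ≤ countJ js j (k-1) := countJ_mono js j (by omega)
  omega
end Aux2

noncomputable def cJ (js : ℕ → ℕ) (ξ : ℕ → ℝ) (j k : ℕ) : ℝ :=
  (if 1 ≤ k ∧ js k = j then ξ k else 0) +
  ∑ ℓ ∈ (Finset.Ico 1 k).filter (fun ℓ => js ℓ ≠ js (ℓ+1)), (-1:ℝ)^(j + js ℓ) * ξ ℓ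

section Key
variable (js : ℕ → ℕ) (ξ : ℕ → ℝ)

lemma cJ_zero (j : ℕ) : cJ js ξ j 0 = 0 := by simp [cJ]

lemma cJ_step (j j' k : ℕ) (hjj' : j ≠ j') (hsign : ((-1:ℝ))^(j+j') = -1)
    (hk1 : js k = j ∨ js k = j' ∨ k = 0) (hk2 : js (k+1) = j ∨ js (k+1) = j') :
    cJ js ξ j (k+1) = cJ js ξ j k +
      (if js (k+1) = j then ξ (k+1) - (if k = 0 then 0 else ξ k) else 0) := by
  have hsign2 : ((-1:ℝ))^(j+j) = 1 := (Even.neg_one_pow ⟨j, rfl⟩)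
  rcases Nat.eq_zero_or_pos k with rfl | hkpos
  · rcases hk2 with hb | hb <;>
      simp [cJ, hb, hjj', Ne.symm hjj']
  · have hins : Finset.Ico 1 (k+1) = insert k (Finset.Ico 1 k) := by
      ext x; simp; omega
    have hknotmem : k ∉ (Finset.Ico 1 k).filter (fun ℓ => js ℓ ≠ js (ℓ+1)) := by simp
    have hk0 : ¬ k = 0 := by omega
    rcases hk1 with ha | ha | h0
    · rcases hk2 with hb | hb
      · have hcond : ¬ (js k ≠ js (k+1)) := by rw [ha, hb]; simp
        unfold cJ
        rw [hins, Finset.filter_insert, if_neg hcond,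
          if_pos (show 1 ≤ k+1 ∧ js (k+1) = j from ⟨by omega, hb⟩),
          if_pos (show 1 ≤ k ∧ js k = j from ⟨hkpos, ha⟩), if_pos hb, if_neg hk0]
        ring
      · have hbne : js (k+1) ≠ j := by rw [hb]; exact fun h => hjj' h.symm
        have hcond : js k ≠ js (k+1) := by rw [ha, hb]; exact hjj'
        unfold cJ
        rw [hins, Finset.filter_insert, if_pos hcond, Finset.sum_insert hknotmem,
          if_neg (show ¬ (1 ≤ k+1 ∧ js (k+1) = j) from fun h => hbne h.2),
          if_pos (show 1 ≤ k ∧ js k = j from ⟨hkpos, ha⟩), if_neg hbne, ha, hsign2]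
        ring
    · rcases hk2 with hb | hb
      · have hcond : js k ≠ js (k+1) := by rw [ha, hb]; exact fun h => hjj' h.symm
        have hane : js k ≠ j := by rw [ha]; exact fun h => hjj' h.symm
        unfold cJ
        rw [hins, Finset.filter_insert, if_pos hcond, Finset.sum_insert hknotmem,
          if_pos (show 1 ≤ k+1 ∧ js (k+1) = j from ⟨by omega, hb⟩),
          if_neg (show ¬ (1 ≤ k ∧ js k = j) from fun h => hane h.2),
          if_pos hb, if_neg hk0, ha, hsign]
        ring
      · have hcond : ¬ (js k ≠ js (k+1)) := by rw [ha, hb]; simp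
        have hbne : js (k+1) ≠ j := by rw [hb]; exact fun h => hjj' h.symm
        have hane : js k ≠ j := by rw [ha]; exact fun h => hjj' h.symm
        unfold cJ
        rw [hins, Finset.filter_insert, if_neg hcond,
          if_neg (show ¬ (1 ≤ k+1 ∧ js (k+1) = j) from fun h => hbne h.2),
          if_neg (show ¬ (1 ≤ k ∧ js k = j) from fun h => hane h.2), if_neg hbne]
        ring
    · omega
end Key

lemma key_telescope {n : ℕ} (js : ℕ → ℕ) (ξ : ℕ → ℝ) (z : Fin n → ℝ) (p q : ℕ → Fin n → ℝ)
    (j j' : ℕ) (hjj' : j ≠ j') (hsign : ((-1:ℝ))^(j+j') = -1)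
    (hval : ∀ k, 1 ≤ k → k ≤ n → js k = j ∨ js k = j')
    (hp0 : p 0 = 0) (hq0 : q 0 = 0)
    (R : ℕ → Fin n → ℝ)
    (hR : ∀ k i, R k i = p (countJ js j k) i + q (countJ js j' k) i +
      (if k = 0 then 0 else ξ k) * z i) :
    ∀ k, k ≤ n → ∀ i,
      ∑ k' ∈ (Finset.range k).filter (fun k' => js (k'+1) = j), (R (k'+1) i - R k' i)
        = p (countJ js j k) i + cJ js ξ j k * z i := by
  intro k
  induction k with
  | zero => intro _ i; simp [countJ_zero, hp0, cJ_zero]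
  | succ k ih =>
    intro hk i
    have hkn : k ≤ n := by omega
    have hb := hval (k+1) (by omega) hk
    have hk1 : js k = j ∨ js k = j' ∨ k = 0 := by
      rcases Nat.eq_zero_or_pos k with h0 | h0
      · right; right; exact h0
      · rcases hval k h0 hkn with h | h
        · left; exact h
        · right; left; exact h
    have hstep := cJ_step js ξ j j' k hjj' hsign hk1 hb
    have hnotmem : k ∉ (Finset.range k).filter (fun k' => js (k'+1) = j) := by simp
    rw [Finset.range_add_one, Finset.filter_insert]
    rcases hb with hb | hb
    · have hbne : js (k+1) ≠ j' := by rw [hb]; exact hjj'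
      rw [if_pos hb, Finset.sum_insert hnotmem, ih hkn i, hstep, if_pos hb]
      rw [hR (k+1) i, hR k i]
      rw [countJ_succ js j k, if_pos hb, countJ_succ js j' k, if_neg hbne]
      rw [if_neg (Nat.succ_ne_zero k)]
      ring
    · have hbne : js (k+1) ≠ j := by rw [hb]; exact Ne.symm hjj'
      rw [if_neg hbne, ih hkn i, hstep, if_neg hbne]
      rw [countJ_succ js j k, if_neg hbne]
      ring

lemma cJ_eq_PhiJ (js : ℕ → ℕ) (ξ : ℕ → ℝ) (j m : ℕ) (h1 : 1 ≤ m) (h2 : js m = j) :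
    cJ js ξ j m = PhiJ js ξ j m := by
  simp [cJ, PhiJ, h1, h2]


/-- **Lemma 4.3.** The Gauss-elimination lemma: `|det M| = |det M′|` where the rows of `M`
are `p_{σ₁(k)} + q_{σ₂(k)} + ξ_k z` and the rows of `M′` are `p_{k₁} + φ₁^σ(k₁) z` followed
by `q_{k₂} + φ₂^σ(k₂) z`. -/
theorem gauss_elimination_det (n n₁ n₂ : ℕ) (hn : n = n₁ + n₂) (js : ℕ → ℕ)
    (hjs : ∀ k, 1 ≤ k → k ≤ n → js k = 1 ∨ js k = 2)
    (hc1 : countJ js 1 n = n₁) (hc2 : countJ js 2 n = n₂)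
    (ξ : ℕ → ℝ) (z : Fin n → ℝ) (p q : ℕ → Fin n → ℝ)
    (hp0 : p 0 = 0) (hq0 : q 0 = 0)
    (M M' : Matrix (Fin n) (Fin n) ℝ)
    (hM : ∀ (k i : Fin n),
      M k i = p (countJ js 1 ((k : ℕ) + 1)) i + q (countJ js 2 ((k : ℕ) + 1)) i +
        ξ ((k : ℕ) + 1) * z i)
    (hM' : ∀ (k i : Fin n),
      M' k i = if (k : ℕ) < n₁ then
          p ((k : ℕ) + 1) i + phiJ js ξ 1 ((k : ℕ) + 1) * z i
        else
          q ((k : ℕ) + 1 - n₁) i + phiJ js ξ 2 ((k : ℕ) + 1 - n₁) * z i) :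
    |M.det| = |M'.det| := by
  classical
  -- the row function over ℕ
  set R : ℕ → Fin n → ℝ := fun k i =>
    p (countJ js 1 k) i + q (countJ js 2 k) i + (if k = 0 then 0 else ξ k) * z i with hRdef
  have hR : ∀ k i, R k i = p (countJ js 1 k) i + q (countJ js 2 k) i +
      (if k = 0 then 0 else ξ k) * z i := fun k i => rfl
  have hR' : ∀ k i, R k i = q (countJ js 2 k) i + p (countJ js 1 k) i +
      (if k = 0 then 0 else ξ k) * z i := by intro k i; rw [hR]; ring
  have hR0 : ∀ i, R 0 i = 0 := by
    intro i; rw [hR]; simp [countJ_zero, hp0, hq0]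
  have hMR : ∀ (k : Fin n) (i : Fin n), M k i = R ((k : ℕ) + 1) i := by
    intro k i; rw [hM, hR]; simp
  -- the elimination matrix
  set C : Matrix (Fin n) (Fin n) ℝ := fun k k' =>
    (if (k' : ℕ) ≤ (k : ℕ) ∧ js ((k' : ℕ) + 1) = js ((k : ℕ) + 1) then 1 else 0)
    - (if (k' : ℕ) + 1 ≤ (k : ℕ) ∧ js ((k' : ℕ) + 2) = js ((k : ℕ) + 1) then 1 else 0)
    with hCdef
  have hdetC : C.det = 1 := by
    rw [Matrix.det_of_lowerTriangular C ?_]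
    · rw [Finset.prod_congr rfl (fun k _ => ?_), Finset.prod_const_one]
      show C k k = 1
      rw [hCdef]
      simp
    · intro a b hab
      have hab' : (a : ℕ) < (b : ℕ) := hab
      rw [hCdef]
      simp only
      rw [if_neg (by omega), if_neg (by omega)]
      ring
  -- the row computation
  have hCM : ∀ (k : Fin n) (i : Fin n), (C * M) k i =
      ∑ k' ∈ (Finset.range ((k : ℕ) + 1)).filter
        (fun k' => js (k' + 1) = js ((k : ℕ) + 1)),
        (R (k' + 1) i - R k' i) := by
    intro k i
    set jk := js ((k : ℕ) + 1) with hjk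
    set A : ℕ → ℝ := fun m => if 1 ≤ m ∧ m ≤ (k : ℕ) + 1 ∧ js m = jk then 1 else 0 with hA
    have hCA : ∀ (k' : Fin n), C k k' = A ((k' : ℕ) + 1) - A ((k' : ℕ) + 2) := by
      intro k'
      rw [hCdef, hA]
      simp only
      congr 1
      · refine if_congr ⟨fun ⟨h1, h2⟩ => ⟨by omega, by omega, h2⟩,
          fun ⟨_, h1, h2⟩ => ⟨by omega, h2⟩⟩ rfl rfl
      · refine if_congr ⟨fun ⟨h1, h2⟩ => ⟨by omega, by omega, h2⟩,
          fun ⟨_, h1, h2⟩ => ⟨by omega, h2⟩⟩ rfl rfl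
    have hmul : (C * M) k i = ∑ k' : Fin n, C k k' * M k' i := by
      simp [Matrix.mul_apply]
    rw [hmul]
    have : ∑ k' : Fin n, C k k' * M k' i
        = ∑ k' ∈ Finset.range n, (A (k' + 1) - A (k' + 2)) * R (k' + 1) i := by
      rw [← Fin.sum_univ_eq_sum_range (fun k' => (A (k' + 1) - A (k' + 2)) * R (k' + 1) i)]
      exact Finset.sum_congr rfl fun k' _ => by rw [hCA k', hMR k' i]
    rw [this]
    have hsplit : ∑ k' ∈ Finset.range n, (A (k' + 1) - A (k' + 2)) * R (k' + 1) i
        = ∑ k' ∈ Finset.range n, A (k' + 1) * R (k' + 1) i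
          - ∑ k' ∈ Finset.range n, A (k' + 2) * R (k' + 1) i := by
      rw [← Finset.sum_sub_distrib]
      exact Finset.sum_congr rfl fun k' _ => by ring
    have hshift : ∑ k' ∈ Finset.range n, A (k' + 2) * R (k' + 1) i
        = ∑ k' ∈ Finset.range n, A (k' + 1) * R k' i := by
      have h1 : ∑ k' ∈ Finset.range (n + 1), A (k' + 1) * R k' i
          = (∑ k' ∈ Finset.range n, A (k' + 1 + 1) * R (k' + 1) i) + A 1 * R 0 i :=
        Finset.sum_range_succ' (fun m => A (m + 1) * R m i) n
      have h2 : ∑ k' ∈ Finset.range (n + 1), A (k' + 1) * R k' i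
          = (∑ k' ∈ Finset.range n, A (k' + 1) * R k' i) + A (n + 1) * R n i :=
        Finset.sum_range_succ (fun m => A (m + 1) * R m i) n
      have hA1 : A (n + 1) = 0 := by
        rw [hA]; simp only; rw [if_neg (by have := k.isLt; omega)]
      have hR0' : R 0 i = 0 := hR0 i
      rw [hR0'] at h1
      rw [hA1] at h2
      have : ∀ k', A (k' + 1 + 1) = A (k' + 2) := fun k' => rfl
      simp only [this] at h1
      rw [mul_zero, add_zero] at h1
      rw [zero_mul, add_zero] at h2
      linarith [h1, h2]
    rw [hsplit, hshift, ← Finset.sum_sub_distrib]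
    have hcomb : ∑ k' ∈ Finset.range n, (A (k' + 1) * R (k' + 1) i - A (k' + 1) * R k' i)
        = ∑ k' ∈ Finset.range n, A (k' + 1) * (R (k' + 1) i - R k' i) := by
      exact Finset.sum_congr rfl fun k' _ => by ring
    rw [hcomb]
    have hite : ∀ k', A (k' + 1) * (R (k' + 1) i - R k' i)
        = if 1 ≤ k' + 1 ∧ k' + 1 ≤ (k : ℕ) + 1 ∧ js (k' + 1) = jk
            then (R (k' + 1) i - R k' i) else 0 := by
      intro k'
      rw [hA]
      simp only
      by_cases h : 1 ≤ k' + 1 ∧ k' + 1 ≤ (k : ℕ) + 1 ∧ js (k' + 1) = jk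
      · rw [if_pos h, if_pos h, one_mul]
      · rw [if_neg h, if_neg h, zero_mul]
    simp only [hite]
    rw [Finset.sum_ite, Finset.sum_const_zero, add_zero]
    apply Finset.sum_congr ?_ (fun _ _ => rfl)
    ext x
    simp only [Finset.mem_filter, Finset.mem_range]
    constructor
    · rintro ⟨_, _, h2, h3⟩; exact ⟨by omega, h3⟩
    · rintro ⟨h1, h2⟩; have := k.isLt; exact ⟨by omega, by omega, by omega, h2⟩
  -- row formulas via telescoping
  have hrow1 : ∀ (kk : Fin n), js ((kk : ℕ) + 1) = 1 → ∀ i, (C * M) kk i =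
      p (countJ js 1 ((kk : ℕ) + 1)) i + cJ js ξ 1 ((kk : ℕ) + 1) * z i := by
    intro kk hk i
    rw [hCM kk i, hk]
    exact key_telescope js ξ z p q 1 2 (by omega) (by norm_num) hjs hp0 hq0 R hR
      ((kk : ℕ) + 1) (by have := kk.isLt; omega) i
  have hrow2 : ∀ (kk : Fin n), js ((kk : ℕ) + 1) = 2 → ∀ i, (C * M) kk i =
      q (countJ js 2 ((kk : ℕ) + 1)) i + cJ js ξ 2 ((kk : ℕ) + 1) * z i := by
    intro kk hk i
    rw [hCM kk i, hk]
    exact key_telescope js ξ z q p 2 1 (by omega) (by norm_num)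
      (fun k h1 h2 => (hjs k h1 h2).symm) hq0 hp0 R hR'
      ((kk : ℕ) + 1) (by have := kk.isLt; omega) i
  -- the permutation
  have hspec1 : ∀ ℓ, 1 ≤ ℓ → ℓ ≤ n₁ →
      1 ≤ invJ js 1 ℓ ∧ invJ js 1 ℓ ≤ n ∧ countJ js 1 (invJ js 1 ℓ) = ℓ ∧
        js (invJ js 1 ℓ) = 1 :=
    fun ℓ h1 h2 => invJ_spec js 1 ℓ n h1 (by rw [hc1]; exact h2)
  have hspec2 : ∀ ℓ, 1 ≤ ℓ → ℓ ≤ n₂ →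
      1 ≤ invJ js 2 ℓ ∧ invJ js 2 ℓ ≤ n ∧ countJ js 2 (invJ js 2 ℓ) = ℓ ∧
        js (invJ js 2 ℓ) = 2 :=
    fun ℓ h1 h2 => invJ_spec js 2 ℓ n h1 (by rw [hc2]; exact h2)
  have hπlt : ∀ (k : Fin n), (k : ℕ) < n₁ → invJ js 1 ((k : ℕ) + 1) - 1 < n := by
    intro k hk; have := hspec1 ((k : ℕ) + 1) (by omega) (by omega); omega
  have hπge : ∀ (k : Fin n), ¬ (k : ℕ) < n₁ → invJ js 2 ((k : ℕ) + 1 - n₁) - 1 < n := by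
    intro k hk; have hkn := k.isLt
    have := hspec2 ((k : ℕ) + 1 - n₁) (by omega) (by omega); omega
  set π : Fin n → Fin n := fun k =>
    if h : (k : ℕ) < n₁ then ⟨invJ js 1 ((k : ℕ) + 1) - 1, hπlt k h⟩
    else ⟨invJ js 2 ((k : ℕ) + 1 - n₁) - 1, hπge k h⟩ with hπdef
  -- M' rows are rows of C * M
  have hM'CM : ∀ (k i : Fin n), M' k i = (C * M) (π k) i := by
    intro k i
    rw [hM' k i]
    by_cases h : (k : ℕ) < n₁
    · rw [if_pos h]
      obtain ⟨h1, h2, h3, h4⟩ := hspec1 ((k : ℕ) + 1) (by omega) (by omega)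
      set m := invJ js 1 ((k : ℕ) + 1) with hm
      have hπk : π k = ⟨m - 1, hπlt k h⟩ := by rw [hπdef]; exact dif_pos h
      have hmm : m - 1 + 1 = m := by omega
      have h4' : js (((⟨m - 1, hπlt k h⟩ : Fin n) : ℕ) + 1) = 1 := by
        show js (m - 1 + 1) = 1; rw [hmm]; exact h4
      rw [hπk, hrow1 ⟨m - 1, hπlt k h⟩ h4' i]
      show p ((k : ℕ) + 1) i + phiJ js ξ 1 ((k : ℕ) + 1) * z i
        = p (countJ js 1 (m - 1 + 1)) i + cJ js ξ 1 (m - 1 + 1) * z i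
      have hφ : phiJ js ξ 1 ((k : ℕ) + 1) = PhiJ js ξ 1 m := by
        rw [phiJ, if_neg (Nat.succ_ne_zero _)]
      rw [hmm, h3, hφ, cJ_eq_PhiJ js ξ 1 m h1 h4]
    · rw [if_neg h]
      have hkn := k.isLt
      obtain ⟨h1, h2, h3, h4⟩ := hspec2 ((k : ℕ) + 1 - n₁) (by omega) (by omega)
      set m := invJ js 2 ((k : ℕ) + 1 - n₁) with hm
      have hπk : π k = ⟨m - 1, hπge k h⟩ := by rw [hπdef]; exact dif_neg h
      have hmm : m - 1 + 1 = m := by omega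
      have h4' : js (((⟨m - 1, hπge k h⟩ : Fin n) : ℕ) + 1) = 2 := by
        show js (m - 1 + 1) = 2; rw [hmm]; exact h4
      rw [hπk, hrow2 ⟨m - 1, hπge k h⟩ h4' i]
      show q ((k : ℕ) + 1 - n₁) i + phiJ js ξ 2 ((k : ℕ) + 1 - n₁) * z i
        = q (countJ js 2 (m - 1 + 1)) i + cJ js ξ 2 (m - 1 + 1) * z i
      have hφ : phiJ js ξ 2 ((k : ℕ) + 1 - n₁) = PhiJ js ξ 2 m := by
        rw [phiJ, if_neg (by omega)]
      rw [hmm, h3, hφ, cJ_eq_PhiJ js ξ 2 m h1 h4]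
  -- π is injective
  have hinj : Function.Injective π := by
    intro a b hab
    have han := a.isLt; have hbn := b.isLt
    apply Fin.ext
    have hval := congrArg Fin.val hab
    by_cases ha : (a : ℕ) < n₁
    · obtain ⟨a1, a2, a3, a4⟩ := hspec1 ((a : ℕ) + 1) (by omega) (by omega)
      by_cases hb : (b : ℕ) < n₁
      · obtain ⟨b1, b2, b3, b4⟩ := hspec1 ((b : ℕ) + 1) (by omega) (by omega)
        simp only [hπdef, dif_pos ha, dif_pos hb] at hval
        have hminv : invJ js 1 ((a : ℕ) + 1) = invJ js 1 ((b : ℕ) + 1) := by omega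
        rw [hminv] at a3; omega
      · obtain ⟨b1, b2, b3, b4⟩ := hspec2 ((b : ℕ) + 1 - n₁) (by omega) (by omega)
        simp only [hπdef, dif_pos ha, dif_neg hb] at hval
        have hminv : invJ js 1 ((a : ℕ) + 1) = invJ js 2 ((b : ℕ) + 1 - n₁) := by omega
        rw [hminv, b4] at a4; omega
    · obtain ⟨a1, a2, a3, a4⟩ := hspec2 ((a : ℕ) + 1 - n₁) (by omega) (by omega)
      by_cases hb : (b : ℕ) < n₁
      · obtain ⟨b1, b2, b3, b4⟩ := hspec1 ((b : ℕ) + 1) (by omega) (by omega)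
        simp only [hπdef, dif_neg ha, dif_pos hb] at hval
        have hminv : invJ js 2 ((a : ℕ) + 1 - n₁) = invJ js 1 ((b : ℕ) + 1) := by omega
        rw [hminv, b4] at a4; omega
      · obtain ⟨b1, b2, b3, b4⟩ := hspec2 ((b : ℕ) + 1 - n₁) (by omega) (by omega)
        simp only [hπdef, dif_neg ha, dif_neg hb] at hval
        have hminv : invJ js 2 ((a : ℕ) + 1 - n₁) = invJ js 2 ((b : ℕ) + 1 - n₁) := by omega
        rw [hminv] at a3; omega
  -- conclude
  have hbij : Function.Bijective π := Finite.injective_iff_bijective.mp hinj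
  set e : Equiv.Perm (Fin n) := Equiv.ofBijective π hbij with hedef
  have hsub : M' = (C * M).submatrix e id := by
    ext k i
    rw [Matrix.submatrix_apply, id]
    exact hM'CM k i
  rw [hsub, Matrix.det_permute, Matrix.det_mul, hdetC, one_mul, abs_mul]
  have hsign : |((Equiv.Perm.sign e : ℤ) : ℝ)| = 1 := by
    rcases Int.units_eq_one_or (Equiv.Perm.sign e) with h | h <;> rw [h] <;> norm_num
  rw [hsign, one_mul]
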